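/- Σ_{n=1}^∞ (−1)^{n−1} / (3^n · C(4n,2n)) = 1/49 − 10√3·π/1029 + (27/343)·ln 3. -/

import Mathlib

open MeasureTheory intervalIntegral Nat Real

noncomputable def gg : ℝ → ℝ := fun t =>
  (5 * ((t*(1-t))^2/3) + ((t*(1-t))^2/3)^2) / (1 + (t*(1-t))^2/3)^2

noncomputable def FF : ℝ → ℝ := fun t =>
  t + (27/686) * (Real.log (t^2+t+1) - Real.log (t^2-3*t+3))
    - (30/343) * (Real.sqrt 3)⁻¹ *
        (Real.arctan ((2*t+1)/Real.sqrt 3) + Real.arctan ((2*t-3)/Real.sqrt 3))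
    + (33-6*t)/(49*(t^2+t+1)) + (-27-6*t)/(49*(t^2-3*t+3))

noncomputable def ff : ℕ → ℝ → ℝ := fun n t =>
  (-1:ℝ)^n * (4*(n:ℝ)+5) * (t*(1-t))^(2*n+2) / 3^(n+1)

lemma nat_prod_fact (n : ℕ) : ∀ m : ℕ, (n)! * ∏ j ∈ Finset.range m, (n + 1 + j) = (n + m)!
  | 0 => by simp
  | m + 1 => by
    rw [Finset.prod_range_succ, ← Nat.mul_assoc, nat_prod_fact n m, ← Nat.add_assoc,
      Nat.factorial_succ]
    ring

lemma beta_nat (k : ℕ) :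
    ∫ x in (0:ℝ)..1, x ^ k * (1 - x) ^ k = ((k)! * (k)! : ℝ) / ((2 * k + 1))! := by
  have h := Complex.betaIntegral_eval_nat_add_one_right
    (u := (k : ℂ) + 1) (by simp; positivity) k
  rw [Complex.betaIntegral] at h
  have hint : (∫ x in (0:ℝ)..1, (x:ℂ) ^ ((k:ℂ) + 1 - 1) * (1 - (x:ℂ)) ^ ((k:ℂ) + 1 - 1))
      = ((∫ x in (0:ℝ)..1, x ^ k * (1 - x) ^ k : ℝ) : ℂ) := by
    rw [← intervalIntegral.integral_ofReal]
    congr 1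
    ext x
    have : (k:ℂ) + 1 - 1 = ((k:ℕ) : ℂ) := by ring
    rw [this, Complex.cpow_natCast, Complex.cpow_natCast]
    push_cast
    ring
  rw [hint] at h
  have hprod : (∏ j ∈ Finset.range (k + 1), ((k:ℂ) + 1 + (j:ℕ)))
      = ((∏ j ∈ Finset.range (k + 1), (k + 1 + j) : ℕ) : ℂ) := by
    push_cast
    ring
  rw [hprod] at h
  have hnat : ((k)! * ∏ j ∈ Finset.range (k + 1), (k + 1 + j)) = ((2 * k + 1))! := by
    rw [nat_prod_fact]
    congr 1
    ring
  have hne : ((∏ j ∈ Finset.range (k + 1), (k + 1 + j) : ℕ) : ℂ) ≠ 0 := by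
    norm_cast
    exact Finset.prod_ne_zero_iff.mpr (fun j _ => by positivity)
  have : ((∫ x in (0:ℝ)..1, x ^ k * (1 - x) ^ k : ℝ) : ℂ)
      = ((k)! * (k)! : ℝ) / (((2 * k + 1))! : ℝ) := by
    rw [h]
    rw [div_eq_div_iff hne (by simp [Nat.factorial_ne_zero])]
    push_cast
    rw [← Nat.cast_mul, ← Nat.cast_mul, ← hnat]
    push_cast
    ring
  exact_mod_cast this

lemma term_eq (n : ℕ) :
    ∫ t in Set.Ioc (0:ℝ) 1, ff n t =
    (-1:ℝ)^n / (3^(n+1) * (Nat.choose (4*(n+1)) (2*(n+1)) : ℝ)) := by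
  have h1 : ∫ t in Set.Ioc (0:ℝ) 1, ff n t
      = ((-1:ℝ)^n * (4*n+5) / 3^(n+1)) * ∫ t in (0:ℝ)..1, t^(2*n+2) * (1-t)^(2*n+2) := by
    rw [intervalIntegral.integral_of_le (by norm_num : (0:ℝ) ≤ 1), ← MeasureTheory.integral_const_mul]
    congr 1
    ext t
    unfold ff
    rw [mul_pow]
    ring
  rw [h1, beta_nat (2*n+2)]
  have hchn : (4*(n+1)).choose (2*(n+1)) * ((2*n+2))! * ((2*n+2))! = ((4*n+4))! := by
    have h := Nat.choose_mul_factorial_mul_factorial (show 2*(n+1) ≤ 4*(n+1) by omega)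
    rw [show 4*(n+1)-2*(n+1) = 2*(n+1) from by omega] at h
    rw [show (2*n+2) = 2*(n+1) from by ring, show (4*n+4) = 4*(n+1) from by ring]
    exact h
  have hch : (Nat.choose (4*(n+1)) (2*(n+1)) : ℝ) * (((2*n+2))! : ℝ) * (((2*n+2))! : ℝ)
      = (((4*n+4))! : ℝ) := by exact_mod_cast congrArg (Nat.cast : ℕ → ℝ) hchn
  have hfact : ((2*(2*n+2)+1))! = (4*n+5) * ((4*n+4))! := by
    rw [show 2*(2*n+2)+1 = (4*n+4)+1 from by ring, Nat.factorial_succ]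
  have hC : (Nat.choose (4*(n+1)) (2*(n+1)) : ℝ) ≠ 0 := by
    have := Nat.choose_pos (show 2*(n+1) ≤ 4*(n+1) by omega)
    positivity
  have hfR : (((2*(2*n+2)+1))! : ℝ) = (4*(n:ℝ)+5) * (((4*n+4))! : ℝ) := by
    exact_mod_cast congrArg (Nat.cast : ℕ → ℝ) hfact
  rw [hfR]
  have hf4 : (((4*n+4))! : ℝ) ≠ 0 := by positivity
  field_simp
  linear_combination hch

lemma sum_eval {u : ℝ} (h0 : 0 ≤ u) (h1 : u < 1) :
    ∑' n : ℕ, (-1:ℝ)^n * (4*(n:ℝ)+5) * u^(n+1) = (5*u + u^2)/(1+u)^2 := by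
  have hr : ‖(-u)‖ < 1 := by
    rw [norm_neg, Real.norm_eq_abs, abs_of_nonneg h0]; exact h1
  have hs1 : Summable (fun n : ℕ => (n:ℝ) * (-u)^n) := by
    simpa using summable_pow_mul_geometric_of_norm_lt_one 1 hr
  have hs2 : Summable (fun n : ℕ => (-u:ℝ)^n) := summable_geometric_of_norm_lt_one hr
  have key : ∀ n : ℕ, (-1:ℝ)^n * (4*(n:ℝ)+5) * u^(n+1)
      = u * (4*((n:ℝ)*(-u)^n) + 5*(-u)^n) := by
    intro n
    rw [neg_pow, pow_succ]
    ring
  rw [tsum_congr key, tsum_mul_left]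
  rw [Summable.tsum_add (hs1.mul_left 4) (hs2.mul_left 5), tsum_mul_left, tsum_mul_left,
    tsum_coe_mul_geometric_of_norm_lt_one hr, tsum_geometric_of_norm_lt_one hr]
  have hne : (1:ℝ) + u ≠ 0 := by positivity
  have hne' : (1:ℝ) - -u ≠ 0 := by linarith
  field_simp
  ring

lemma hasDeriv_FF (t : ℝ) : HasDerivAt FF (gg t) t := by
  have hq1 : (0:ℝ) < t^2+t+1 := by nlinarith [sq_nonneg (t + 1/2)]
  have hq2 : (0:ℝ) < t^2-3*t+3 := by nlinarith [sq_nonneg (t - 3/2)]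
  have hs0 : (0:ℝ) < Real.sqrt 3 := Real.sqrt_pos.mpr (by norm_num)
  have hs : Real.sqrt 3 * Real.sqrt 3 = 3 := Real.mul_self_sqrt (by norm_num)
  set s := Real.sqrt 3 with hsdef
  have hs2 : s^2 = 3 := by rw [sq]; exact hs
  have hinv : s⁻¹ = s / 3 := by
    field_simp
    linarith [hs]
  have hp1 : HasDerivAt (fun x : ℝ => x^2+x+1) (2*t+1) t := by
    simpa using ((hasDerivAt_pow 2 t).add (hasDerivAt_id t)).add_const 1
  have hp2 : HasDerivAt (fun x : ℝ => x^2-3*x+3) (2*t-3) t := by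
    simpa using ((hasDerivAt_pow 2 t).sub ((hasDerivAt_id t).const_mul 3)).add_const 3
  have hlog1 : HasDerivAt (fun x : ℝ => Real.log (x^2+x+1)) ((2*t+1)/(t^2+t+1)) t := by
    have := (Real.hasDerivAt_log hq1.ne').comp t hp1
    simpa [div_eq_inv_mul, Function.comp_def] using this
  have hlog2 : HasDerivAt (fun x : ℝ => Real.log (x^2-3*x+3)) ((2*t-3)/(t^2-3*t+3)) t := by
    have := (Real.hasDerivAt_log hq2.ne').comp t hp2
    simpa [div_eq_inv_mul, Function.comp_def] using this
  have harc1 : HasDerivAt (fun x : ℝ => Real.arctan ((2*x+1)/s)) (s/(2*(t^2+t+1))) t := by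
    have hinner : HasDerivAt (fun x : ℝ => (2*x+1)/s) (2/s) t := by
      simpa using (((hasDerivAt_id t).const_mul 2).add_const 1).div_const s
    have := (Real.hasDerivAt_arctan ((2*t+1)/s)).comp t hinner
    refine this.congr_deriv ?_
    rw [div_pow, hs2, div_eq_mul_inv 2 s, hinv]
    have hq1' : t * (t + 1) + 1 ≠ 0 := by nlinarith
    field_simp
    ring
  have harc2 : HasDerivAt (fun x : ℝ => Real.arctan ((2*x-3)/s)) (s/(2*(t^2-3*t+3))) t := by
    have hinner : HasDerivAt (fun x : ℝ => (2*x-3)/s) (2/s) t := by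
      simpa using (((hasDerivAt_id t).const_mul 2).sub_const 3).div_const s
    have := (Real.hasDerivAt_arctan ((2*t-3)/s)).comp t hinner
    refine this.congr_deriv ?_
    rw [div_pow, hs2, div_eq_mul_inv 2 s, hinv]
    have hq2' : t * (t - 3) + 3 ≠ 0 := by nlinarith
    field_simp
    ring
  have hr1 : HasDerivAt (fun x : ℝ => (33-6*x)/(49*(x^2+x+1)))
      (((-6)*(49*(t^2+t+1)) - (33-6*t)*(49*(2*t+1)))/(49*(t^2+t+1))^2) t := by
    have hnum : HasDerivAt (fun x : ℝ => 33-6*x) (-6) t := by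
      simpa [Pi.sub_def] using (hasDerivAt_const t (33:ℝ)).sub ((hasDerivAt_id t).const_mul 6)
    exact hnum.div (hp1.const_mul 49) (by positivity)
  have hr2 : HasDerivAt (fun x : ℝ => (-27-6*x)/(49*(x^2-3*x+3)))
      (((-6)*(49*(t^2-3*t+3)) - (-27-6*t)*(49*(2*t-3)))/(49*(t^2-3*t+3))^2) t := by
    have hnum : HasDerivAt (fun x : ℝ => -27-6*x) (-6) t := by
      simpa [Pi.sub_def] using (hasDerivAt_const t (-27:ℝ)).sub ((hasDerivAt_id t).const_mul 6)
    exact hnum.div (hp2.const_mul 49) (by positivity)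
  have hF : HasDerivAt FF
      (1 + (27/686) * ((2*t+1)/(t^2+t+1) - (2*t-3)/(t^2-3*t+3))
        - (30/343) * s⁻¹ * (s/(2*(t^2+t+1)) + s/(2*(t^2-3*t+3)))
        + ((-6)*(49*(t^2+t+1)) - (33-6*t)*(49*(2*t+1)))/(49*(t^2+t+1))^2
        + ((-6)*(49*(t^2-3*t+3)) - (-27-6*t)*(49*(2*t-3)))/(49*(t^2-3*t+3))^2) t := by
    have := ((((hasDerivAt_id t).add ((hlog1.sub hlog2).const_mul (27/686))).sub
      ((harc1.add harc2).const_mul ((30/343) * s⁻¹))).add hr1).add hr2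
    exact this
  convert hF using 1
  unfold gg
  have hcanc : ∀ a : ℝ, s⁻¹ * (s/a) = 1/a := by
    intro a
    rw [div_eq_mul_inv, ← mul_assoc, inv_mul_cancel₀ hs0.ne', one_mul, one_div]
  rw [mul_assoc ((30:ℝ)/343) s⁻¹, mul_add s⁻¹, hcanc, hcanc]
  have hu : (0:ℝ) < 1 + (t*(1-t))^2/3 := by positivity
  have hq1' : t * (t + 1) + 1 ≠ 0 := by nlinarith
  have hq2' : t * (t - 3) + 3 ≠ 0 := by nlinarith
  field_simp
  ring

lemma integral_gg : ∫ t in (0:ℝ)..1, gg t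
    = 1/49 - 10*Real.sqrt 3*Real.pi/1029 + (27/343)*Real.log 3 := by
  have hcont : Continuous gg := by
    unfold gg
    exact Continuous.div (by fun_prop) (by fun_prop) (fun t => by positivity)
  rw [intervalIntegral.integral_eq_sub_of_hasDerivAt (fun x _ => hasDeriv_FF x)
    (hcont.intervalIntegrable 0 1)]
  have hs0 : (0:ℝ) < Real.sqrt 3 := Real.sqrt_pos.mpr (by norm_num)
  have hs : Real.sqrt 3 * Real.sqrt 3 = 3 := Real.mul_self_sqrt (by norm_num)
  have hpi : (0:ℝ) < Real.pi := Real.pi_pos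
  have ha3 : Real.arctan (Real.sqrt 3) = Real.pi/3 := by
    rw [← Real.tan_pi_div_three, Real.arctan_tan (by linarith) (by linarith)]
  have ha6 : Real.arctan (Real.sqrt 3)⁻¹ = Real.pi/6 := by
    rw [← one_div, ← Real.tan_pi_div_six, Real.arctan_tan (by linarith) (by linarith)]
  have ha3' : Real.arctan (3/Real.sqrt 3) = Real.pi/3 := by
    rw [show (3:ℝ)/Real.sqrt 3 = Real.sqrt 3 from by rw [div_eq_iff hs0.ne']; exact hs.symm, ha3]
  have ha6' : Real.arctan (1/Real.sqrt 3) = Real.pi/6 := by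
    rw [one_div, ha6]
  unfold FF
  norm_num
  rw [show (-1:ℝ)/Real.sqrt 3 = -(1/Real.sqrt 3) from by ring,
    show (-3:ℝ)/Real.sqrt 3 = -(3/Real.sqrt 3) from by ring,
    Real.arctan_neg, Real.arctan_neg, ha3', ha6']
  have hinv : (Real.sqrt 3)⁻¹ = Real.sqrt 3 / 3 := by
    field_simp
    exact (Real.sq_sqrt (by norm_num)).symm
  rw [hinv]
  ring

lemma ff_cont (n : ℕ) : Continuous (ff n) := by
  unfold ff
  fun_prop

lemma ff_nonneg_sign (n : ℕ) (t : ℝ) : ‖ff n t‖ = (-1:ℝ)^n * ff n t := by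
  have hw : (0:ℝ) ≤ (t*(1-t))^(2*n+2) := Even.pow_nonneg ⟨n+1, by ring⟩ _
  have hg : (0:ℝ) ≤ (4*(n:ℝ)+5) * (t*(1-t))^(2*n+2) / 3^(n+1) := by positivity
  unfold ff
  rw [Real.norm_eq_abs]
  rcases Nat.even_or_odd n with he | ho
  · rw [he.neg_one_pow]
    rw [one_mul, one_mul]
    exact abs_of_nonneg hg
  · rw [ho.neg_one_pow, neg_one_mul, neg_one_mul]
    have h2 : -(4*(n:ℝ)+5) * (t*(1-t))^(2*n+2) / 3^(n+1)
        = -((4*(n:ℝ)+5) * (t*(1-t))^(2*n+2) / 3^(n+1)) := by ring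
    rw [h2, abs_neg, neg_neg, abs_of_nonneg hg]

theorem stmt_8 :
    ∑' n : ℕ, (-1 : ℝ) ^ n /
      (3 ^ (n + 1) * (Nat.choose (4 * (n + 1)) (2 * (n + 1)) : ℝ)) =
    1 / 49 - 10 * Real.sqrt 3 * Real.pi / 1029 + (27 / 343) * Real.log 3 := by
  have hint : ∀ n : ℕ, Integrable (ff n) (volume.restrict (Set.Ioc (0:ℝ) 1)) := by
    intro n
    exact (ff_cont n).integrableOn_Ioc
  have hnorm : ∀ n : ℕ, (∫ t in Set.Ioc (0:ℝ) 1, ‖ff n t‖)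
      = 1 / (3^(n+1) * (Nat.choose (4*(n+1)) (2*(n+1)) : ℝ)) := by
    intro n
    have h1 : (∫ t in Set.Ioc (0:ℝ) 1, ‖ff n t‖)
        = (-1:ℝ)^n * ∫ t in Set.Ioc (0:ℝ) 1, ff n t := by
      rw [← MeasureTheory.integral_const_mul]
      exact integral_congr_ae (Filter.Eventually.of_forall (fun t => ff_nonneg_sign n t))
    rw [h1, term_eq n, ← mul_div_assoc, ← pow_add]
    norm_num
  have hsum : Summable (fun n : ℕ => ∫ t in Set.Ioc (0:ℝ) 1, ‖ff n t‖) := by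
    rw [funext hnorm]
    refine Summable.of_nonneg_of_le (fun n => by positivity) (fun n => ?_)
      (summable_geometric_of_lt_one (r := (1/3:ℝ)) (by norm_num) (by norm_num))
    have hC1 : (1:ℝ) ≤ (Nat.choose (4*(n+1)) (2*(n+1)) : ℝ) := by
      exact_mod_cast Nat.one_le_iff_ne_zero.mpr
        (Nat.choose_pos (show 2*(n+1) ≤ 4*(n+1) by omega)).ne'
    have h3 : (0:ℝ) < 3^(n+1) := by positivity
    rw [div_pow, one_pow]
    apply div_le_div_of_nonneg_left (by norm_num) (by positivity)
    calc ((3:ℝ))^n ≤ 3^(n+1) := by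
          apply pow_le_pow_right₀ (by norm_num) (by omega)
      _ ≤ 3^(n+1) * (Nat.choose (4*(n+1)) (2*(n+1)) : ℝ) := le_mul_of_one_le_right h3.le hC1
  have hswap := MeasureTheory.integral_tsum_of_summable_integral_norm hint hsum
  have hpt : ∀ t ∈ Set.Ioc (0:ℝ) 1, (∑' n : ℕ, ff n t) = gg t := by
    intro t ht
    obtain ⟨ht0, ht1⟩ := ht
    have hw0 : (0:ℝ) ≤ t*(1-t) := by nlinarith
    have hw4 : t*(1-t) ≤ 1/4 := by nlinarith [sq_nonneg (t - 1/2)]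
    set u : ℝ := (t*(1-t))^2/3 with hu
    have h0 : (0:ℝ) ≤ u := by positivity
    have h1 : u < 1 := by
      rw [hu]
      nlinarith
    have hffu : ∀ n : ℕ, ff n t = (-1:ℝ)^n * (4*(n:ℝ)+5) * u^(n+1) := by
      intro n
      unfold ff
      rw [hu, div_pow, ← pow_mul]
      rw [show 2*(n+1) = 2*n+2 from by ring]
      ring
    rw [tsum_congr hffu, sum_eval h0 h1]
    unfold gg
    rw [hu]
  calc ∑' n : ℕ, (-1 : ℝ) ^ n /
        (3 ^ (n + 1) * (Nat.choose (4 * (n + 1)) (2 * (n + 1)) : ℝ))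
      = ∑' n : ℕ, ∫ t in Set.Ioc (0:ℝ) 1, ff n t := tsum_congr (fun n => (term_eq n).symm)
    _ = ∫ t in Set.Ioc (0:ℝ) 1, ∑' n : ℕ, ff n t := hswap
    _ = ∫ t in Set.Ioc (0:ℝ) 1, gg t := setIntegral_congr_fun measurableSet_Ioc hpt
    _ = ∫ t in (0:ℝ)..1, gg t := (intervalIntegral.integral_of_le (by norm_num)).symm
    _ = 1 / 49 - 10 * Real.sqrt 3 * Real.pi / 1029 + (27 / 343) * Real.log 3 := integral_gg
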